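/- Let G be a finite tree embedded in ℂ with vertex set v₁, …, v_{n+s}, where v₁, …, v_n are the terminals and v_{n+1}, …, v_{n+s} are branching points, edges being straight segments. Suppose that at every branching point v_k (k > n), the sum over edges (k,j) of the unit vectors (v_k − v_j)/|v_k − v_j| is zero. For each terminal p_k = v_k (k ≤ n), suppose p_k has a unique incident edge, and let c_k be the unit complex number in the direction of that edge pointing away from the tree into p_k. Then the total length of the tree, i.e. the sum of |v_k − v_j| over all edges, equals Σ_{k=1}^n conj(c_k) · p_k. In particular this sum is a real number. -/

import Mathlib

open Finset

lemma unit_conj_mul {z : ℂ} (hz : z ≠ 0) :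
    (starRingEnd ℂ) (z / (‖z‖ : ℂ)) * z = (‖z‖ : ℂ) := by
  have h : (‖z‖ : ℂ) ≠ 0 := by
    simpa using norm_ne_zero_iff.mpr hz
  rw [map_div₀, Complex.conj_ofReal, div_mul_eq_mul_div, Complex.conj_mul']
  have hzn : (‖z‖ : ℂ) = (‖z‖ : ℂ) := rfl
  rw [hzn] at h ⊢
  rw [sq, mul_div_assoc, div_self h, mul_one]

/-- Maxwell-type formula: for a finite tree embedded in `ℂ` with straight edges,
vertices `v 0, …, v (n+s-1)` where the first `n` are terminals (unique incident
edge, with outer unit direction `c k`) and the balancing condition holds at all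
other vertices, the total length equals `∑ conj (c k) * p k`. -/
theorem maxwell_formula (n s : ℕ) (hn : 1 < n)
    (G : SimpleGraph (Fin (n + s))) [DecidableRel G.Adj] (hG : G.IsTree)
    (v : Fin (n + s) → ℂ) (hv : Function.Injective v)
    (c : Fin n → ℂ)
    (hbal : ∀ k : Fin (n + s), n ≤ (k : ℕ) →
      ∑ j ∈ Finset.univ.filter (fun j => G.Adj k j),
        (v k - v j) / (‖v k - v j‖ : ℂ) = 0)
    (hterm : ∀ k : Fin n, ∃! j, G.Adj (Fin.castAdd s k) j)
    (hc : ∀ (k : Fin n) (j : Fin (n + s)), G.Adj (Fin.castAdd s k) j →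
      c k = (v (Fin.castAdd s k) - v j) / (‖v (Fin.castAdd s k) - v j‖ : ℂ)) :
    (((1 / 2 : ℝ) * ∑ k, ∑ j, if G.Adj k j then dist (v k) (v j) else 0 : ℝ) : ℂ)
      = ∑ k : Fin n, (starRingEnd ℂ) (c k) * v (Fin.castAdd s k) := by
  have hne : ∀ {a b : Fin (n + s)}, G.Adj a b → v a - v b ≠ 0 := by
    intro a b hab
    exact sub_ne_zero.mpr (fun h => (G.ne_of_adj hab) (hv h))
  set F : Fin (n + s) → Fin (n + s) → ℂ := fun k j =>
    if G.Adj k j then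
      (starRingEnd ℂ) ((v k - v j) / (‖v k - v j‖ : ℂ)) * v k else 0 with hF
  have hA : ∑ k, ∑ j, F k j = ∑ k : Fin n, (starRingEnd ℂ) (c k) * v (Fin.castAdd s k) := by
    have hinner : ∀ k : Fin (n + s), ∑ j, F k j =
        (starRingEnd ℂ) (∑ j ∈ Finset.univ.filter (fun j => G.Adj k j),
          (v k - v j) / (‖v k - v j‖ : ℂ)) * v k := by
      intro k
      rw [map_sum, Finset.sum_mul, Finset.sum_filter]
    calc ∑ k, ∑ j, F k j
        = ∑ k, (starRingEnd ℂ) (∑ j ∈ Finset.univ.filter (fun j => G.Adj k j),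
          (v k - v j) / (‖v k - v j‖ : ℂ)) * v k := by
          exact Finset.sum_congr rfl fun k _ => hinner k
      _ = ∑ k : Fin n, (starRingEnd ℂ) (c k) * v (Fin.castAdd s k) := by
          rw [Fin.sum_univ_add]
          have h2 : ∀ i : Fin s,
              (starRingEnd ℂ) (∑ j ∈ Finset.univ.filter (fun j => G.Adj (Fin.natAdd n i) j),
                (v (Fin.natAdd n i) - v j) / (‖v (Fin.natAdd n i) - v j‖ : ℂ))
                * v (Fin.natAdd n i) = 0 := by
            intro i
            rw [hbal (Fin.natAdd n i) (by simp)]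
            simp
          rw [Finset.sum_congr rfl fun i _ => h2 i]
          simp only [Finset.sum_const_zero, add_zero]
          refine Finset.sum_congr rfl fun k _ => ?_
          obtain ⟨j₀, hj₀, huniq⟩ := hterm k
          have hfilt : Finset.univ.filter (fun j => G.Adj (Fin.castAdd s k) j) = {j₀} := by
            ext x
            simp only [Finset.mem_filter, Finset.mem_univ, true_and, Finset.mem_singleton]
            exact ⟨fun h => huniq x h, fun h => h ▸ hj₀⟩
          rw [hfilt, Finset.sum_singleton, ← hc k j₀ hj₀]
  have hB : ∑ k, ∑ j, (if G.Adj k j then ((‖v k - v j‖ : ℝ) : ℂ) else 0)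
      = 2 * ∑ k, ∑ j, F k j := by
    have hswap : ∑ k, ∑ j, F k j = ∑ k, ∑ j, F j k := Finset.sum_comm
    rw [two_mul]
    nth_rewrite 2 [hswap]
    rw [← Finset.sum_add_distrib]
    refine Finset.sum_congr rfl fun k _ => ?_
    rw [← Finset.sum_add_distrib]
    refine Finset.sum_congr rfl fun j _ => ?_
    simp only [hF]
    by_cases hadj : G.Adj k j
    · have hadj' : G.Adj j k := hadj.symm
      rw [if_pos hadj, if_pos hadj, if_pos hadj']
      have habs : ‖v j - v k‖ = ‖v k - v j‖ := by
        rw [← norm_neg, neg_sub]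
      have : (v j - v k) / (‖v j - v k‖ : ℂ)
          = -((v k - v j) / (‖v k - v j‖ : ℂ)) := by
        rw [habs, ← neg_div, neg_sub]
      rw [this, map_neg, neg_mul, ← sub_eq_add_neg, ← mul_sub,
        unit_conj_mul (hne hadj)]
    · have hadj' : ¬ G.Adj j k := fun h => hadj h.symm
      rw [if_neg hadj, if_neg hadj, if_neg hadj']
      ring
  have hcast : (((1 / 2 : ℝ) * ∑ k, ∑ j, if G.Adj k j then dist (v k) (v j) else 0 : ℝ) : ℂ)
      = (1 / 2 : ℂ) * ∑ k, ∑ j, (if G.Adj k j then ((‖v k - v j‖ : ℝ) : ℂ) else 0) := by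
    push_cast
    simp only [apply_ite Complex.ofReal, Complex.ofReal_zero, Complex.dist_eq]
  rw [hcast, hB, hA]
  ring
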